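/- arXiv:1402.3159 — 2 statements merged into one kernel-verified Lean document; each statement's English description precedes it below -/
import Mathlib

section
/- Let R be a commutative ring, s ≥ 1, and assign to each variable x_i a positive integer weight k_i, making the polynomial ring R[x_1,…,x_s] a graded ring where a monomial x_1^{a_1}⋯x_s^{a_s} has weight a_1k_1+⋯+a_sk_s. Fix a natural number M and for each i let α_i be the least nonnegative integer with α_i k_i > M. Then every monomial of weight strictly greater than M is a product of monomials from the set {x_1^{α_1},…,x_s^{α_s}} ∪ {x_1^{i_1}⋯x_s^{i_s} : i_1k_1+⋯+i_sk_s > M and 0 ≤ i_j < 2α_j for all j}. -/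
/-- Lemma 3.3 (combinatorial core): every exponent vector of weight `> M` is a
sum of exponent vectors from the listed finite generating set. -/
theorem weighted_monomial_generation (s : ℕ) (hs : 1 ≤ s) (k : Fin s → ℕ)
    (hk : ∀ i, 1 ≤ k i) (M : ℕ) (α : Fin s → ℕ)
    (hα : ∀ i, M < α i * k i ∧ ∀ β : ℕ, β < α i → ¬ M < β * k i)
    (a : Fin s → ℕ) (ha : M < ∑ i, a i * k i) :
    ∃ l : Multiset (Fin s → ℕ),
      (∀ b ∈ l,
        (∃ i, b = Pi.single i (α i)) ∨
        (M < ∑ j, b j * k j ∧ ∀ j, b j < 2 * α j)) ∧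
      l.sum = a := by
  have key : ∀ n (a : Fin s → ℕ), ∑ i, a i ≤ n → M < ∑ i, a i * k i →
      ∃ l : Multiset (Fin s → ℕ),
        (∀ b ∈ l,
          (∃ i, b = Pi.single i (α i)) ∨
          (M < ∑ j, b j * k j ∧ ∀ j, b j < 2 * α j)) ∧
        l.sum = a := by
    intro n
    induction n with
    | zero =>
      intro a h0 hw
      exfalso
      have : ∀ i ∈ Finset.univ, a i = 0 := by
        intro i _
        have := Finset.sum_eq_zero_iff.mp (Nat.le_zero.mp h0) i (Finset.mem_univ i)
        exact this
      have : (∑ i, a i * k i) = 0 := Finset.sum_eq_zero (fun i hi => by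
        rw [this i hi]; ring)
      omega
    | succ n ih =>
      intro a h0 hw
      by_cases hall : ∀ j, a j < 2 * α j
      · exact ⟨{a}, by
          intro b hb
          rw [Multiset.mem_singleton] at hb
          subst hb
          exact Or.inr ⟨hw, hall⟩, Multiset.sum_singleton a⟩
      · push_neg at hall
        obtain ⟨j, hj⟩ := hall
        have hαj : 1 ≤ α j := by
          by_contra h
          have h0' : α j = 0 := by omega
          have h1 := (hα j).1
          rw [h0', zero_mul] at h1
          omega
        set a' := Function.update a j (a j - α j) with ha'
        have ha'j : a' j = a j - α j := Function.update_self j _ a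
        have ha'i : ∀ i, i ≠ j → a' i = a i := fun i hi =>
          Function.update_of_ne hi _ a
        have hsum : ∑ i, a' i < ∑ i, a i := by
          apply Finset.sum_lt_sum
          · intro i _
            by_cases h : i = j
            · subst h; omega
            · rw [ha'i i h]
          · exact ⟨j, Finset.mem_univ j, by omega⟩
        have hw' : M < ∑ i, a' i * k i := by
          calc M < α j * k j := (hα j).1
          _ ≤ a' j * k j := Nat.mul_le_mul_right _ (by omega)
          _ ≤ ∑ i, a' i * k i :=
              Finset.single_le_sum (f := fun i => a' i * k i) (fun i _ => Nat.zero_le _) (Finset.mem_univ j)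
        obtain ⟨l', hl', hsl'⟩ := ih a' (by omega) hw'
        refine ⟨Pi.single j (α j) ::ₘ l', ?_, ?_⟩
        · intro b hb
          rw [Multiset.mem_cons] at hb
          rcases hb with hb | hb
          · exact Or.inl ⟨j, hb⟩
          · exact hl' b hb
        · rw [Multiset.sum_cons, hsl']
          funext i
          by_cases h : i = j
          · subst h
            simp only [Pi.add_apply, Pi.single_eq_same, ha'j]
            omega
          · simp only [Pi.add_apply, Pi.single_eq_of_ne h, ha'i i h]
            omega
  exact key (∑ i, a i) a le_rfl ha
end

section
/- With weights k_1,…,k_s ≥ 1, M ∈ ℕ, and α_i the least nonnegative integer with α_i k_i > M: if an exponent vector a = (a_1,…,a_s) satisfies ∑ a_i k_i > 2(α_1k_1+⋯+α_sk_s), then writing a_i = α_i q_i + r_i with 0 ≤ r_i < α_i, there exists an index j₀ with q_{j₀} ≥ 1, and a decomposes as a = h₁ + h₂ where h₁ = (r_1,…,r_{j₀-1}, r_{j₀}+α_{j₀}, r_{j₀+1},…,r_s) and h₂ = a − h₁, and both h₁ and h₂ have weight strictly greater than M (h₂ possibly being a nonnegative combination of the vectors α_i e_i). -/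
/-- The inductive step in the proof of Lemma 3.3. -/
theorem weighted_monomial_induction_step (s : ℕ) (hs : 1 ≤ s) (k : Fin s → ℕ)
    (hk : ∀ i, 1 ≤ k i) (M : ℕ) (α : Fin s → ℕ)
    (hα : ∀ i, M < α i * k i ∧ ∀ β : ℕ, β < α i → ¬ M < β * k i)
    (a : Fin s → ℕ) (ha : 2 * ∑ i, α i * k i < ∑ i, a i * k i) :
    ∃ j₀ : Fin s, 1 ≤ a j₀ / α j₀ ∧
      ∀ h₁ h₂ : Fin s → ℕ,
        (h₁ = fun i => if i = j₀ then a i % α i + α i else a i % α i) →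
        (h₂ = fun i => a i - h₁ i) →
        (∀ i, a i = h₁ i + h₂ i) ∧
        (M < ∑ i, h₁ i * k i) ∧
        (M < ∑ i, h₂ i * k i) ∧
        (∃ c : Fin s → ℕ, ∀ i, h₂ i = c i * α i) := by
  have hα1 : ∀ i, 1 ≤ α i := by
    intro i
    rcases Nat.eq_zero_or_pos (α i) with h | h
    · exfalso; have := (hα i).1; rw [h] at this; simp at this
    · exact h
  -- find j₀
  have hj : ∃ j₀, 1 ≤ a j₀ / α j₀ := by
    by_contra hcon
    push_neg at hcon
    have hall : ∀ i, a i < α i := by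
      intro i
      exact (Nat.div_eq_zero_iff.1 (Nat.lt_one_iff.mp (hcon i))).resolve_left (by have := hα1 i; omega)
    have hle : (∑ i, a i * k i) ≤ ∑ i, α i * k i := by
      apply Finset.sum_le_sum
      intro i _
      exact Nat.mul_le_mul_right _ (le_of_lt (hall i))
    omega
  obtain ⟨j₀, hq⟩ := hj
  refine ⟨j₀, hq, ?_⟩
  intro h₁ h₂ hh₁ hh₂
  subst hh₁ hh₂
  have hmod : ∀ i, α i * (a i / α i) + a i % α i = a i := fun i => Nat.div_add_mod _ _
  have hmlt : ∀ i, a i % α i < α i := fun i => Nat.mod_lt _ (hα1 i)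
  have haj : a j₀ % α j₀ + α j₀ ≤ a j₀ := by
    have := hmod j₀
    have h2 : α j₀ * 1 ≤ α j₀ * (a j₀ / α j₀) := Nat.mul_le_mul_left _ hq
    omega
  have hdecomp : ∀ i, a i = (if i = j₀ then a i % α i + α i else a i % α i) +
      (a i - (if i = j₀ then a i % α i + α i else a i % α i)) := by
    intro i
    have h1 := Nat.mod_le (a i) (α i)
    by_cases h : i = j₀
    · subst h; rw [if_pos rfl]; omega
    · rw [if_neg h]; omega
  have hc : ∀ i, (a i - (if i = j₀ then a i % α i + α i else a i % α i)) =
      (if i = j₀ then a i / α i - 1 else a i / α i) * α i := by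
    intro i
    by_cases h : i = j₀
    · subst h; rw [if_pos rfl, if_pos rfl]
      have key : (a i / α i - 1) * α i = α i * (a i / α i) - α i := by
        rw [Nat.sub_mul, one_mul, Nat.mul_comm]
      have := hmod i
      have h2 : α i * 1 ≤ α i * (a i / α i) := Nat.mul_le_mul_left _ hq
      omega
    · rw [if_neg h, if_neg h]
      have := hmod i
      have key : a i / α i * α i = α i * (a i / α i) := Nat.mul_comm _ _
      omega
  refine ⟨hdecomp, ?_, ?_, ⟨_, hc⟩⟩
  · -- h₁ weight > M
    calc M < α j₀ * k j₀ := (hα j₀).1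
    _ ≤ (if j₀ = j₀ then a j₀ % α j₀ + α j₀ else a j₀ % α j₀) * k j₀ := by
        rw [if_pos rfl]; exact Nat.mul_le_mul_right _ (by omega)
    _ ≤ ∑ i, (if i = j₀ then a i % α i + α i else a i % α i) * k i :=
        Finset.single_le_sum
          (f := fun i => (if i = j₀ then a i % α i + α i else a i % α i) * k i)
          (fun i _ => Nat.zero_le _) (Finset.mem_univ j₀)
  · -- h₂ weight > M
    set h₁f := fun i => (if i = j₀ then a i % α i + α i else a i % α i) with hh₁f
    set h₂f := fun i => a i - h₁f i with hh₂f
    have hsum : (∑ i, a i * k i) = (∑ i, h₁f i * k i) + ∑ i, h₂f i * k i := by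
      rw [← Finset.sum_add_distrib]
      apply Finset.sum_congr rfl
      intro i _
      rw [← Nat.add_mul]
      congr 1
      exact hdecomp i
    have hajle : α j₀ * k j₀ ≤ ∑ i, α i * k i :=
      Finset.single_le_sum (f := fun i => α i * k i)
        (fun i _ => Nat.zero_le _) (Finset.mem_univ j₀)
    have hb : (∑ i, h₁f i * k i) ≤ (∑ i, α i * k i) + α j₀ * k j₀ := by
      have hstep : (∑ i, h₁f i * k i)
          ≤ ∑ i, (α i * k i + (if i = j₀ then α i * k i else 0)) := by
        apply Finset.sum_le_sum
        intro i _
        by_cases h : i = j₀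
        · subst h
          simp only [hh₁f, if_pos rfl]
          have := hmlt i
          calc (a i % α i + α i) * k i ≤ (α i + α i) * k i :=
                Nat.mul_le_mul_right _ (by omega)
          _ = α i * k i + α i * k i := by ring
        · simp only [hh₁f, if_neg h]
          have : α i * k i + 0 ≤ α i * k i + α i * k i := by omega
          calc a i % α i * k i ≤ α i * k i :=
                Nat.mul_le_mul_right _ (le_of_lt (hmlt i))
          _ ≤ α i * k i + 0 := by omega
      rw [Finset.sum_add_distrib, Finset.sum_ite_eq' Finset.univ j₀] at hstep
      simpa using hstep
    have hpos : 1 ≤ ∑ i, h₂f i * k i := by omega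
    have hex : ∃ i, 0 < h₂f i * k i := by
      by_contra hcon
      push_neg at hcon
      have : (∑ i, h₂f i * k i) = 0 :=
        Finset.sum_eq_zero (fun i _ => by have := hcon i; omega)
      omega
    obtain ⟨i, hi⟩ := hex
    have hge : α i ≤ h₂f i := by
      have hci := hc i
      simp only [hh₂f, hh₁f] at hi ⊢
      rw [hci] at hi ⊢
      have hpos2 : 1 ≤ (if i = j₀ then a i / α i - 1 else a i / α i) := by
        by_contra hcon
        push_neg at hcon
        have h0 : (if i = j₀ then a i / α i - 1 else a i / α i) = 0 := by omega
        rw [h0, Nat.zero_mul] at hi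
        omega
      calc α i = 1 * α i := (one_mul _).symm
      _ ≤ _ := Nat.mul_le_mul_right _ hpos2
    calc M < α i * k i := (hα i).1
    _ ≤ h₂f i * k i := Nat.mul_le_mul_right _ hge
    _ ≤ ∑ j, h₂f j * k j :=
        Finset.single_le_sum (f := fun j => h₂f j * k j)
          (fun j _ => Nat.zero_le _) (Finset.mem_univ i)
end
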